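/- Let λ₁,…,λ_{n+1} be pairwise distinct reals, x₁,…,x_n and Y arbitrary reals. Then ∑_{σ∈S_{n+1}} ∏_{k=1}^{n} ((λ_{σ(1)}x₁ + ⋯ + λ_{σ(k)}x_k − Y)/(λ_{σ(k)} − λ_{σ(k+1)})) = ∏_{k=1}^{n} (x₁ + ⋯ + x_k). -/

import Mathlib

open Finset Polynomial

section helpers

lemma lagrange_sum {N : ℕ} (v : Fin (N+1) → ℝ) (hv : Function.Injective v)
    (h : Polynomial ℝ) (hd : h.natDegree ≤ N) :
    ∑ j, h.eval (v j) / ∏ i ∈ Finset.univ.erase j, (v j - v i) = h.coeff N := by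
  have hcard : (univ : Finset (Fin (N+1))).card = N + 1 := by simp
  have hdeg : h.degree < (univ : Finset (Fin (N+1))).card := by
    refine lt_of_le_of_lt h.degree_le_natDegree ?_
    rw [hcard]
    exact_mod_cast Nat.lt_succ_of_le hd
  have hint := Lagrange.eq_interpolate (v := v) hv.injOn hdeg
  have hbasis : ∀ j : Fin (N+1), (Lagrange.basis univ v j).coeff N
      = ∏ i ∈ univ.erase j, (v j - v i)⁻¹ := by
    intro j
    have hc : (univ.erase j).card = N := by
      simp [card_erase_of_mem]
    have h2 := coeff_prod_of_natDegree_le (s := univ.erase j)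
      (f := fun i => Lagrange.basisDivisor (v j) (v i)) 1 ?_
    · rw [hc, mul_one] at h2
      rw [Lagrange.basis, h2]
      refine Finset.prod_congr rfl fun i _ => ?_
      simp [Lagrange.basisDivisor, coeff_C]
    · intro p _
      unfold Lagrange.basisDivisor
      refine le_trans (natDegree_mul_le) ?_
      simp [natDegree_X_sub_C]
  calc ∑ j, h.eval (v j) / ∏ i ∈ Finset.univ.erase j, (v j - v i)
      = ∑ j, h.eval (v j) * (Lagrange.basis univ v j).coeff N := by
        refine Finset.sum_congr rfl fun j _ => ?_
        rw [hbasis j, div_eq_mul_inv, ← prod_inv_distrib]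
    _ = h.coeff N := by
        conv_rhs => rw [hint]
        rw [Lagrange.interpolate_apply, finset_sum_coeff]
        exact Finset.sum_congr rfl fun j _ => by rw [coeff_C_mul]

lemma Iic_succ_eq {m : ℕ} (k : Fin m) :
    (Finset.Iic k.succ : Finset (Fin (m+1)))
      = insert 0 ((Finset.Iic k).map ⟨Fin.succ, Fin.succ_injective m⟩) := by
  ext i
  refine Fin.cases ?_ (fun i' => ?_) i
  · simp [Fin.zero_le]
  · simp [Fin.succ_le_succ_iff, (Fin.succ_ne_zero i').symm, Fin.succ_ne_zero,
      Fin.succ_inj, eq_comm]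

lemma sum_Iic_succ {M : Type*} [AddCommMonoid M] {m : ℕ} (k : Fin m) (g : Fin (m+1) → M) :
    ∑ i ∈ Finset.Iic k.succ, g i = g 0 + ∑ i ∈ Finset.Iic k, g i.succ := by
  rw [Iic_succ_eq, Finset.sum_insert (by simp [Fin.succ_ne_zero, eq_comm]), Finset.sum_map]
  rfl

lemma sum_Iic_zero {M : Type*} [AddCommMonoid M] {m : ℕ} (g : Fin (m+1) → M) :
    ∑ i ∈ Finset.Iic (0 : Fin (m+1)), g i = g 0 := by
  have : (Finset.Iic (0 : Fin (m+1))) = {0} := by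
    ext i
    simp [Fin.le_zero_iff]
  rw [this, Finset.sum_singleton]

variable {m : ℕ} (j : Fin (m+2))

def semb : Fin (m+1) ↪ Fin (m+2) :=
  ⟨fun a => Equiv.swap 0 j a.succ,
   fun a b hab => Fin.succ_injective _ ((Equiv.swap 0 j).injective hab)⟩

lemma semb_ne (a : Fin (m+1)) : semb j a ≠ j := by
  intro hcon
  have h1 : Equiv.swap 0 j a.succ = Equiv.swap 0 j 0 := by
    change Equiv.swap 0 j a.succ = j at hcon
    simpa [semb, Equiv.swap_apply_left] using hcon
  exact Fin.succ_ne_zero a ((Equiv.swap 0 j).injective h1)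

lemma not_mem_map_semb (s : Finset (Fin (m+1))) : j ∉ s.map (semb j) := by
  simp only [Finset.mem_map]
  rintro ⟨a, -, h⟩
  exact semb_ne j a h

lemma univ_eq_insert_semb :
    (Finset.univ : Finset (Fin (m+2))) = insert j (Finset.univ.map (semb j)) := by
  have hcard : (insert j (Finset.univ.map (semb j))).card = m + 2 := by
    rw [Finset.card_insert_of_notMem (not_mem_map_semb j _), Finset.card_map]
    simp
  refine (Finset.eq_of_subset_of_card_le (Finset.subset_univ _) ?_).symm
  simp [hcard]

lemma erase_semb_eq (j' : Fin (m+1)) :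
    (Finset.univ.erase (semb j j') : Finset (Fin (m+2)))
      = insert j ((Finset.univ.erase j').map (semb j)) := by
  ext a
  simp only [Finset.mem_erase, Finset.mem_univ, and_true, Finset.mem_insert,
    Finset.mem_map]
  constructor
  · intro ha
    rcases eq_or_ne a j with rfl | haj
    · exact Or.inl rfl
    · refine Or.inr ?_
      have : Equiv.swap 0 j a ≠ 0 := by
        intro hc
        exact haj (by simpa using congrArg (Equiv.swap 0 j) hc)
      refine ⟨(Equiv.swap 0 j a).pred this, ⟨?_, ?_⟩⟩
      · intro hc
        apply ha
        rw [← hc]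
        show a = Equiv.swap 0 j (Fin.succ _)
        simp only [semb, Function.Embedding.coeFn_mk, Fin.succ_pred, Equiv.swap_apply_self]
      · show Equiv.swap 0 j (Fin.succ _) = a
        simp only [semb, Function.Embedding.coeFn_mk, Fin.succ_pred, Equiv.swap_apply_self]
  · rintro (h | ⟨b, ⟨hb, rfl⟩⟩)
    · rw [h]
      exact Ne.symm (semb_ne j j')
    · intro hc
      exact hb ((semb j).injective hc)

end helpers

noncomputable def W (n : ℕ) (Y : ℝ) (l : Fin (n+1) → ℝ) (x : Fin n → ℝ) (σ : Equiv.Perm (Fin (n+1))) : ℝ :=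
  ∏ k : Fin n, ((∑ i ∈ Finset.Iic k, l (σ i.castSucc) * x i) - Y) /
    (l (σ k.castSucc) - l (σ k.succ))

lemma keyB : ∀ (n : ℕ) (Y : ℝ) (l : Fin (n+1) → ℝ), Function.Injective l →
    ∀ (x : Fin n → ℝ) (j : Fin (n+1)),
    ∑ e : Equiv.Perm (Fin n), W n Y l x (Equiv.Perm.decomposeFin.symm (j, e))
    = (∏ k : Fin n, ((∑ i ∈ Finset.Iic k, x i) * l j - Y))
        / ∏ i ∈ Finset.univ.erase j, (l j - l i) := by
  intro n
  induction n with
  | zero =>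
    intro Y l _ x j
    have hj : j = 0 := Fin.fin_one_eq_zero j
    subst hj
    simp [W]
  | succ m IH =>
    intro Y l hl x j
    set l' : Fin (m+1) → ℝ := fun a => l (semb j a) with hl'def
    have hl' : Function.Injective l' := fun a b hab => (semb j).injective (hl hab)
    set x' : Fin m → ℝ := fun i => x i.succ with hx'def
    set Y' : ℝ := Y - l j * x 0 with hY'def
    set c : ℝ := l j * x 0 - Y with hcdef
    -- reindex the permutation sum
    rw [← Equiv.sum_comp (Equiv.Perm.decomposeFin (n := m)).symm
        (fun e => W (m+1) Y l x (Equiv.Perm.decomposeFin.symm (j, e))), Fintype.sum_prod_type]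
    -- summand decomposition
    have hsummand : ∀ (j' : Fin (m+1)) (τ : Equiv.Perm (Fin m)),
        W (m+1) Y l x (Equiv.Perm.decomposeFin.symm
            (j, Equiv.Perm.decomposeFin.symm (j', τ)))
          = (c / (l j - l' j')) * W m Y' l' x' (Equiv.Perm.decomposeFin.symm (j', τ)) := by
      intro j' τ
      set e : Equiv.Perm (Fin (m+1)) := Equiv.Perm.decomposeFin.symm (j', τ) with hedef
      set σ : Equiv.Perm (Fin (m+2)) := Equiv.Perm.decomposeFin.symm (j, e) with hσdef
      have hσ0 : σ 0 = j := Equiv.Perm.decomposeFin_symm_apply_zero j e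
      have he0 : e 0 = j' := Equiv.Perm.decomposeFin_symm_apply_zero j' τ
      have hσs : ∀ a : Fin (m+1), l (σ a.succ) = l' (e a) := by
        intro a
        rw [hσdef, Equiv.Perm.decomposeFin_symm_apply_succ]
        rfl
      unfold W
      rw [Fin.prod_univ_succ]
      congr 1
      · rw [sum_Iic_zero (g := fun i : Fin (m+1) => l (σ i.castSucc) * x i)]
        simp only [Fin.castSucc_zero, hσ0, hσs 0, he0]
        rw [hcdef]
      · refine Finset.prod_congr rfl fun k' _ => ?_
        rw [sum_Iic_succ (g := fun i : Fin (m+1) => l (σ i.castSucc) * x i) k']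
        simp only [← Fin.succ_castSucc, hσs, Fin.castSucc_zero, hσ0]
        rw [hx'def, hY'def]
        ring
    simp only [hsummand]
    simp only [← Finset.mul_sum]
    simp only [IH Y' l' hl' x']
    -- Lagrange part
    set q : Polynomial ℝ :=
      ∏ k' : Fin m, (Polynomial.C (∑ i ∈ Finset.Iic k', x' i) * Polynomial.X
        + Polynomial.C (-Y')) with hqdef
    have hdeg : q.natDegree ≤ m := by
      refine le_trans (Polynomial.natDegree_prod_le _ _) ?_
      refine le_trans (Finset.sum_le_card_nsmul _ _ 1 fun k _ => natDegree_linear_le) ?_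
      simp
    have hL := lagrange_sum l hl q (le_trans hdeg (Nat.le_succ m))
    rw [Polynomial.coeff_eq_zero_of_natDegree_lt (lt_of_le_of_lt hdeg (Nat.lt_succ_self m))]
      at hL
    have hjnot : j ∉ (Finset.univ : Finset (Fin (m+1))).map (semb j) := not_mem_map_semb j _
    have hsplitA : ∀ A : Fin (m+2) → ℝ,
        ∑ a : Fin (m+2), A a = A j + ∑ j' : Fin (m+1), A (semb j j') := by
      intro A
      rw [univ_eq_insert_semb j, Finset.sum_insert hjnot, Finset.sum_map]
    have hsplit : ∑ a : Fin (m+2), Polynomial.eval (l a) q / ∏ b ∈ Finset.univ.erase a, (l a - l b)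
        = Polynomial.eval (l j) q / ∏ b ∈ Finset.univ.erase j, (l j - l b)
          + ∑ j' : Fin (m+1), Polynomial.eval (l (semb j j')) q
              / ∏ b ∈ Finset.univ.erase (semb j j'), (l (semb j j') - l b) :=
      hsplitA (fun a => Polynomial.eval (l a) q / ∏ b ∈ Finset.univ.erase a, (l a - l b))
    rw [hsplit] at hL
    have hsum : ∑ j' : Fin (m+1), Polynomial.eval (l (semb j j')) q
        / ∏ b ∈ Finset.univ.erase (semb j j'), (l (semb j j') - l b)
        = -(Polynomial.eval (l j) q / ∏ b ∈ Finset.univ.erase j, (l j - l b)) := by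
      linarith [hL]
    -- rewrite each term
    have hterm : ∀ j' : Fin (m+1),
        c / (l j - l' j') * ((∏ k' : Fin m, ((∑ i ∈ Finset.Iic k', x' i) * l' j' - Y'))
            / ∏ i ∈ Finset.univ.erase j', (l' j' - l' i))
        = -(c * (Polynomial.eval (l (semb j j')) q
            / ∏ b ∈ Finset.univ.erase (semb j j'), (l (semb j j') - l b))) := by
      intro j'
      have hprod : ∏ b ∈ Finset.univ.erase (semb j j'), (l (semb j j') - l b)
          = (l' j' - l j) * ∏ i ∈ Finset.univ.erase j', (l' j' - l' i) := by
        rw [erase_semb_eq, Finset.prod_insert (not_mem_map_semb j _), Finset.prod_map]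
      have hev : Polynomial.eval (l (semb j j')) q
          = ∏ k' : Fin m, ((∑ i ∈ Finset.Iic k', x' i) * l' j' - Y') := by
        show Polynomial.eval (l' j') q = _
        rw [hqdef, Polynomial.eval_prod]
        refine Finset.prod_congr rfl fun k' _ => ?_
        simp only [Polynomial.eval_add, Polynomial.eval_mul, Polynomial.eval_C,
          Polynomial.eval_X, sub_eq_add_neg]
      rw [hprod, hev, div_mul_div_comm, ← mul_div_assoc,
        show l j - l' j' = -(l' j' - l j) by ring, neg_mul, div_neg]
    simp only [hterm]
    rw [Finset.sum_neg_distrib, ← Finset.mul_sum, hsum]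
    have hnum : c * Polynomial.eval (l j) q
        = ∏ k : Fin (m+1), ((∑ i ∈ Finset.Iic k, x i) * l j - Y) := by
      rw [Fin.prod_univ_succ]
      congr 1
      · rw [sum_Iic_zero (g := x), hcdef]
        ring
      · rw [hqdef, Polynomial.eval_prod]
        refine Finset.prod_congr rfl fun k' _ => ?_
        rw [sum_Iic_succ (g := x) k']
        rw [hx'def, hY'def]
        simp only [Polynomial.eval_add, Polynomial.eval_mul, Polynomial.eval_C,
          Polynomial.eval_X]
        ring
    rw [mul_neg, neg_neg, ← mul_div_assoc, hnum]

theorem stmt14 (n : ℕ) (Y : ℝ) (l : Fin (n+1) → ℝ) (x : Fin n → ℝ)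
    (hl : Function.Injective l) :
    ∑ σ : Equiv.Perm (Fin (n+1)), ∏ k : Fin n,
      ((∑ i ∈ Finset.Iic k, l (σ i.castSucc) * x i) - Y) /
        (l (σ k.castSucc) - l (σ k.succ))
    = ∏ k : Fin n, ∑ i ∈ Finset.Iic k, x i := by
  show ∑ σ : Equiv.Perm (Fin (n+1)), W n Y l x σ = ∏ k : Fin n, ∑ i ∈ Finset.Iic k, x i
  have h1 : ∑ σ : Equiv.Perm (Fin (n+1)), W n Y l x σ
      = ∑ j : Fin (n+1), (∏ k : Fin n, ((∑ i ∈ Finset.Iic k, x i) * l j - Y))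
          / ∏ i ∈ Finset.univ.erase j, (l j - l i) := by
    rw [← Equiv.sum_comp (Equiv.Perm.decomposeFin (n := n)).symm (W n Y l x),
      Fintype.sum_prod_type]
    exact Finset.sum_congr rfl fun j _ => keyB n Y l hl x j
  set g : Polynomial ℝ :=
    ∏ k : Fin n, (Polynomial.C (∑ i ∈ Finset.Iic k, x i) * Polynomial.X
      + Polynomial.C (-Y)) with hgdef
  have hdeg : g.natDegree ≤ n := by
    refine le_trans (Polynomial.natDegree_prod_le _ _) ?_
    refine le_trans (Finset.sum_le_card_nsmul _ _ 1 fun k _ => natDegree_linear_le) ?_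
    simp
  have hL := lagrange_sum l hl g hdeg
  have hev : ∀ j : Fin (n+1), Polynomial.eval (l j) g
      = ∏ k : Fin n, ((∑ i ∈ Finset.Iic k, x i) * l j - Y) := by
    intro j
    rw [hgdef, Polynomial.eval_prod]
    refine Finset.prod_congr rfl fun k _ => ?_
    simp only [Polynomial.eval_add, Polynomial.eval_mul, Polynomial.eval_C,
      Polynomial.eval_X, sub_eq_add_neg]
  have hcoeff : g.coeff n = ∏ k : Fin n, ∑ i ∈ Finset.Iic k, x i := by
    have h2 := coeff_prod_of_natDegree_le (s := (Finset.univ : Finset (Fin n)))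
      (f := fun k => Polynomial.C (∑ i ∈ Finset.Iic k, x i) * Polynomial.X
        + Polynomial.C (-Y)) 1 (fun p _ => natDegree_linear_le)
    rw [Finset.card_univ, Fintype.card_fin, mul_one] at h2
    rw [hgdef, h2]
    refine Finset.prod_congr rfl fun k _ => ?_
    simp [coeff_C]
  have h3 : ∑ j : Fin (n+1), (∏ k : Fin n, ((∑ i ∈ Finset.Iic k, x i) * l j - Y))
      / ∏ i ∈ Finset.univ.erase j, (l j - l i) = g.coeff n := by
    rw [← hL]
    exact Finset.sum_congr rfl fun j _ => by rw [hev j]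
  rw [h1, h3, hcoeff]
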